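/- Let F ⊆ S_n be a t-cycle-intersecting family that is fixed. Then for any i, j ∈ [n] with i < j, the family C_{i,j}(F) is also t-cycle-intersecting. -/

import Mathlib

open Equiv Finset
open scoped Classical

noncomputable section

/-- A common cycle of two permutations `σ` and `π`: a nonempty subset `B` invariant
under both, on which they agree, and on which `σ` acts as a single cycle. -/
def IsCommonCycle {n : ℕ} (σ π : Equiv.Perm (Fin n)) (B : Finset (Fin n)) : Prop :=
  B.Nonempty ∧ (∀ x ∈ B, σ x ∈ B) ∧ (∀ x ∈ B, π x ∈ B) ∧
  (∀ x ∈ B, σ x = π x) ∧ (∀ x ∈ B, ∀ y ∈ B, σ.SameCycle x y)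

/-- A family of permutations is `t`-cycle-intersecting if any two of its members
have at least `t` common cycles on pairwise disjoint subsets. -/
def TCycleIntersecting {n : ℕ} (t : ℕ) (F : Set (Equiv.Perm (Fin n))) : Prop :=
  ∀ σ ∈ F, ∀ π ∈ F, ∃ 𝒞 : Finset (Finset (Fin n)),
    t ≤ 𝒞.card ∧ (∀ B ∈ 𝒞, IsCommonCycle σ π B) ∧
    (𝒞 : Set (Finset (Fin n))).Pairwise fun A B => Disjoint A B

/-- The `ij`-fixing of a permutation: if `σ i = j` then make `i` a fixed point and
send `σ⁻¹ i` to `j`, leaving everything else unchanged. -/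
def ijFix {n : ℕ} (i j : Fin n) (σ : Equiv.Perm (Fin n)) : Equiv.Perm (Fin n) :=
  if σ i = j then σ * Equiv.swap i (σ⁻¹ i) else σ

/-- The `ij`-fixing operation on a family of permutations. -/
def fixFamOp {n : ℕ} (i j : Fin n) (A : Set (Equiv.Perm (Fin n))) :
    Set (Equiv.Perm (Fin n)) :=
  (fun σ => if ijFix i j σ ∈ A then σ else ijFix i j σ) '' A

/-- A family is fixed if it is closed under all `ij`-fixing operations. -/
def IsFixedFam {n : ℕ} (A : Set (Equiv.Perm (Fin n))) : Prop :=
  ∀ i j : Fin n, i ≠ j → fixFamOp i j A = A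

/-- The `(i,j)`-compression of a permutation: if `σ i ≠ i` and `σ j = j`, then
fix `i`, send `j` to `σ i` and `σ⁻¹ i` to `j`; otherwise leave `σ` unchanged. -/
def compPerm {n : ℕ} (i j : Fin n) (σ : Equiv.Perm (Fin n)) : Equiv.Perm (Fin n) :=
  if σ i ≠ i ∧ σ j = j then (Equiv.swap i (σ i) * Equiv.swap i j) * σ else σ

/-- The `(i,j)`-compression operation on a family of permutations. -/
def compFam {n : ℕ} (i j : Fin n) (A : Set (Equiv.Perm (Fin n))) :
    Set (Equiv.Perm (Fin n)) :=
  (fun σ => if compPerm i j σ ∈ A then σ else compPerm i j σ) '' A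

/-- A family is compressed if it is closed under all `(i,j)`-compressions. -/
def IsCompressedFam {n : ℕ} (A : Set (Equiv.Perm (Fin n))) : Prop :=
  ∀ i j : Fin n, i < j → compFam i j A = A

/-- `F` is the stabilizer of `t` points: there are `t` distinct points such that `F`
consists exactly of the permutations fixing all of them. -/
def IsTPointStabilizer {n : ℕ} (t : ℕ) (F : Set (Equiv.Perm (Fin n))) : Prop :=
  ∃ a : Fin t ↪ Fin n, F = {σ | ∀ k, σ (a k) = a k}

/-- The set of fixed points of a permutation. -/
def fixSet {n : ℕ} (σ : Equiv.Perm (Fin n)) : Finset (Fin n) :=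
  Finset.univ.filter fun x => σ x = x

/-- The up-permutation of a set `B`: all permutations fixing every element of `B`. -/
def UpSet {n : ℕ} (B : Finset (Fin n)) : Set (Equiv.Perm (Fin n)) :=
  {σ | ∀ x ∈ B, σ x = x}

/-- The up-permutation of a collection of sets. -/
def UpFam {n : ℕ} (g : Set (Finset (Fin n))) : Set (Equiv.Perm (Fin n)) :=
  ⋃ B ∈ g, UpSet B

/-- `g` is a generating set for `F`: it contains no set of size `n-1` and
`Up(g) = F`. -/
def IsGenSet {n : ℕ} (g : Set (Finset (Fin n))) (F : Set (Equiv.Perm (Fin n))) : Prop :=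
  (∀ B ∈ g, B.card ≠ n - 1) ∧ UpFam g = F

/-- `s⁺(B)`: the largest element of `B`, in the 1-based numbering of `[n] = {1,…,n}`
(so `s⁺(∅) = 0`). -/
def sPlus {n : ℕ} (B : Finset (Fin n)) : ℕ := B.sup fun x => (x : ℕ) + 1

/-- `s⁺(g) = max {s⁺(B) : B ∈ g}`. -/
def sPlusFam {n : ℕ} (g : Set (Finset (Fin n))) : ℕ := sSup (sPlus '' g)

/-- `s_min(G(F)) = min {s⁺(g) : g a generating set of F}`. -/
def sMin {n : ℕ} (F : Set (Equiv.Perm (Fin n))) : ℕ :=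
  sInf (sPlusFam '' {g | IsGenSet g F})

/-- `L(B)`: all sets obtained from `B` by left-shifting, i.e. sets of the same size
whose `i`-th smallest element is at most the `i`-th smallest element of `B`. -/
def LSet {n : ℕ} (B : Finset (Fin n)) : Set (Finset (Fin n)) :=
  {A | ∃ h : A.card = B.card, ∀ i : Fin B.card,
      A.orderEmbOfFin h i ≤ B.orderEmbOfFin rfl i}

/-- `L(g) = ⋃_{B ∈ g} L(B)`. -/
def LFam {n : ℕ} (g : Set (Finset (Fin n))) : Set (Finset (Fin n)) :=
  ⋃ B ∈ g, LSet B

/-- `L_*(g)`: the minimal (under inclusion) elements of `L(g)`. -/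
def Lstar {n : ℕ} (g : Set (Finset (Fin n))) : Set (Finset (Fin n)) :=
  {A | A ∈ LFam g ∧ ∀ A' ∈ LFam g, A' ⊆ A → A' = A}

/-- The interval `[m] = {1,…,m}` inside `Fin n` (1-based). -/
def Ival (n m : ℕ) : Finset (Fin n) := Finset.univ.filter fun x => (x : ℕ) < m

/-- `D(E) = {σ : fix(σ) ∩ [s⁺(E)] = E}`. -/
def DSet {n : ℕ} (E : Finset (Fin n)) : Set (Equiv.Perm (Fin n)) :=
  {σ | fixSet σ ∩ Ival n (sPlus E) = E}


theorem Equiv.Perm.apply_inv_self {α : Type*} (f : Perm α) (x : α) : f (f⁻¹ x) = x :=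
  (eq_symm_apply f).mp rfl

theorem Equiv.Perm.inv_apply_self {α : Type*} (f : Perm α) (x : α) : f⁻¹ (f x) = x :=
  Perm.inv_eq_iff_eq.mpr rfl

lemma permPowMem {n : ℕ} {σ : Perm (Fin n)} {B : Finset (Fin n)}
    (hinv : ∀ x ∈ B, σ x ∈ B) : ∀ (k : ℕ) (x : Fin n), x ∈ B → (σ ^ k) x ∈ B := by
  intro k
  induction k with
  | zero => intro x hx; simpa using hx
  | succ k ih => intro x hx; rw [pow_succ, Perm.mul_apply]; exact ih _ (hinv x hx)

lemma memOfSameCycle {n : ℕ} {σ : Perm (Fin n)} {B : Finset (Fin n)}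
    (hinv : ∀ x ∈ B, σ x ∈ B) {x y : Fin n} (hx : x ∈ B) (h : σ.SameCycle x y) :
    y ∈ B := by
  obtain ⟨k, -, hk⟩ := h.exists_pow_eq'
  rw [← hk]; exact permPowMem hinv k x hx

lemma fixedOfSameCycle {n : ℕ} {σ : Perm (Fin n)} {x y : Fin n} (hx : σ x = x)
    (h : σ.SameCycle x y) : y = x := by
  obtain ⟨k, -, hk⟩ := h.exists_pow_eq'
  rw [← hk]; clear hk
  induction k with
  | zero => simp
  | succ k ih => rw [pow_succ, Perm.mul_apply, hx]; exact ih

lemma permPowAgree {n : ℕ} {σ π : Perm (Fin n)} {B : Finset (Fin n)}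
    (hinv : ∀ x ∈ B, σ x ∈ B) (hag : ∀ x ∈ B, σ x = π x) :
    ∀ (k : ℕ) (x : Fin n), x ∈ B → (σ ^ k) x = (π ^ k) x := by
  intro k
  induction k with
  | zero => intro x hx; simp
  | succ k ih =>
    intro x hx
    rw [pow_succ, pow_succ, Perm.mul_apply, Perm.mul_apply, ← hag x hx]
    exact ih (σ x) (hinv x hx)

lemma IsCommonCycle.symm {n : ℕ} {σ π : Perm (Fin n)} {B : Finset (Fin n)}
    (h : IsCommonCycle σ π B) : IsCommonCycle π σ B := by
  obtain ⟨hne, hσ, hπ, hag, hsc⟩ := h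
  refine ⟨hne, hπ, hσ, fun x hx => (hag x hx).symm, fun x hx y hy => ?_⟩
  obtain ⟨k, -, hk⟩ := (hsc x hx y hy).exists_pow_eq'
  exact ⟨(k : ℤ), by rw [zpow_natCast, ← permPowAgree hσ hag k x hx, hk]⟩

lemma IsCommonCycle.transfer {n : ℕ} {σ π π' : Perm (Fin n)} {B : Finset (Fin n)}
    (h : IsCommonCycle σ π B) (hag : ∀ x ∈ B, π x = π' x) : IsCommonCycle σ π' B := by
  obtain ⟨hne, hσ, hπ, haσπ, hsc⟩ := h
  exact ⟨hne, hσ, fun x hx => by rw [← hag x hx]; exact hπ x hx,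
    fun x hx => (haσπ x hx).trans (hag x hx), hsc⟩

lemma IsCommonCycle.conj {n : ℕ} {σ π : Perm (Fin n)} {B : Finset (Fin n)}
    (h : IsCommonCycle σ π B) (s : Perm (Fin n)) :
    IsCommonCycle (s * σ * s⁻¹) (s * π * s⁻¹) (B.image s) := by
  obtain ⟨hne, hσ, hπ, hag, hsc⟩ := h
  refine ⟨hne.image s, ?_, ?_, ?_, ?_⟩
  · intro x hx
    rw [Finset.mem_image] at hx ⊢
    obtain ⟨b, hb, rfl⟩ := hx
    exact ⟨σ b, hσ b hb, by simp [Perm.mul_apply]⟩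
  · intro x hx
    rw [Finset.mem_image] at hx ⊢
    obtain ⟨b, hb, rfl⟩ := hx
    exact ⟨π b, hπ b hb, by simp [Perm.mul_apply]⟩
  · intro x hx
    rw [Finset.mem_image] at hx
    obtain ⟨b, hb, rfl⟩ := hx
    simp only [Perm.mul_apply, Perm.inv_apply_self]
    rw [hag b hb]
  · intro x hx y hy
    rw [Finset.mem_image] at hx hy
    obtain ⟨b, hb, rfl⟩ := hx
    obtain ⟨c, hc, rfl⟩ := hy
    obtain ⟨k, hk⟩ := hsc b hb c hc
    exact ⟨k, by rw [conj_zpow]; simp only [Perm.mul_apply, Perm.inv_apply_self]; rw [hk]⟩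

lemma conjExistsCycles {n t : ℕ} {σ π : Perm (Fin n)} (s : Perm (Fin n))
    (h : ∃ 𝒞 : Finset (Finset (Fin n)), t ≤ 𝒞.card ∧
      (∀ B ∈ 𝒞, IsCommonCycle σ π B) ∧
      (𝒞 : Set (Finset (Fin n))).Pairwise fun A B => Disjoint A B) :
    ∃ 𝒞 : Finset (Finset (Fin n)), t ≤ 𝒞.card ∧
      (∀ B ∈ 𝒞, IsCommonCycle (s * σ * s⁻¹) (s * π * s⁻¹) B) ∧
      (𝒞 : Set (Finset (Fin n))).Pairwise fun A B => Disjoint A B := by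
  obtain ⟨𝒞, hcard, hcyc, hdisj⟩ := h
  refine ⟨𝒞.image (Finset.image s), ?_, ?_, ?_⟩
  · rwa [Finset.card_image_of_injective _ (Finset.image_injective s.injective)]
  · intro B hB
    rw [Finset.mem_image] at hB
    obtain ⟨B', hB', rfl⟩ := hB
    exact (hcyc B' hB').conj s
  · intro A hA B hB hAB
    rw [Finset.mem_coe, Finset.mem_image] at hA hB
    obtain ⟨A', hA', rfl⟩ := hA
    obtain ⟨B', hB', rfl⟩ := hB
    have hne : A' ≠ B' := fun h => hAB (by rw [h])
    exact (Finset.disjoint_image s.injective).2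
      (hdisj (Finset.mem_coe.mpr hA') (Finset.mem_coe.mpr hB') hne)

lemma memOfFixedFam {n : ℕ} {F : Set (Perm (Fin n))} (hfix : IsFixedFam F)
    {σ : Perm (Fin n)} (hσ : σ ∈ F) {i j : Fin n} (hij : i ≠ j) :
    ijFix i j σ ∈ F := by
  by_cases h : ijFix i j σ ∈ F
  · exact h
  · have hm : ijFix i j σ ∈ fixFamOp i j F := ⟨σ, hσ, by simp only [if_neg h]⟩
    rwa [hfix i j hij] at hm

lemma compPermSpec {n : ℕ} {π : Perm (Fin n)} {i j : Fin n} (hij : i ≠ j)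
    (hπi : π i ≠ i) (hπj : π j = j) :
    compPerm i j π i = i ∧ compPerm i j π j = π i ∧
    (∀ x, π x = i → compPerm i j π x = j) ∧
    (∀ x, x ≠ i → x ≠ j → π x ≠ i → compPerm i j π x = π x) := by
  have hπij : π i ≠ j := fun h => hij (π.injective (h.trans hπj.symm))
  have hc : compPerm i j π = (Equiv.swap i (π i) * Equiv.swap i j) * π := by
    unfold compPerm; rw [if_pos ⟨hπi, hπj⟩]
  refine ⟨?_, ?_, ?_, ?_⟩
  · rw [hc, Perm.mul_apply, Perm.mul_apply,
      swap_apply_of_ne_of_ne hπi hπij, swap_apply_right]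
  · rw [hc, Perm.mul_apply, Perm.mul_apply, hπj, swap_apply_right, swap_apply_left]
  · intro x hx
    rw [hc, Perm.mul_apply, Perm.mul_apply, hx, swap_apply_left,
      swap_apply_of_ne_of_ne (Ne.symm hij) (Ne.symm hπij)]
  · intro x h1 h2 h3
    have h4 : π x ≠ j := fun h => h2 (π.injective (h.trans hπj.symm))
    have h5 : π x ≠ π i := fun h => h1 (π.injective h)
    rw [hc, Perm.mul_apply, Perm.mul_apply, swap_apply_of_ne_of_ne h3 h4,
      swap_apply_of_ne_of_ne h3 h5]

lemma compPermEqConj {n : ℕ} {π : Perm (Fin n)} {i j : Fin n} (hij : i ≠ j)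
    (hπi : π i ≠ i) (hπj : π j = j) :
    compPerm i j π = Equiv.swap i j * π * Equiv.swap i j := by
  obtain ⟨c_i, c_j, c_pre, c_other⟩ := compPermSpec hij hπi hπj
  have hπij : π i ≠ j := fun h => hij (π.injective (h.trans hπj.symm))
  ext x
  simp only [Perm.mul_apply]
  by_cases hxi : x = i
  · subst hxi
    rw [c_i, swap_apply_left, hπj, swap_apply_right]
  by_cases hxj : x = j
  · subst hxj
    rw [c_j, swap_apply_right, swap_apply_of_ne_of_ne hπi hπij]
  by_cases hπxi : π x = i
  · rw [c_pre x hπxi, swap_apply_of_ne_of_ne hxi hxj, hπxi, swap_apply_left]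
  · have hπxj : π x ≠ j := fun h => hxj (π.injective (h.trans hπj.symm))
    rw [c_other x hxi hxj hπxi, swap_apply_of_ne_of_ne hxi hxj,
      swap_apply_of_ne_of_ne hπxi hπxj]

lemma conjEqSelf {n : ℕ} {σ : Perm (Fin n)} {i j : Fin n}
    (hσi : σ i = i) (hσj : σ j = j) :
    Equiv.swap i j * σ * Equiv.swap i j = σ := by
  ext x
  simp only [Perm.mul_apply]
  by_cases hxi : x = i
  · subst hxi; rw [swap_apply_left, hσj, swap_apply_right, hσi]
  by_cases hxj : x = j
  · subst hxj; rw [swap_apply_right, hσi, swap_apply_left, hσj]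
  · have h1 : σ x ≠ i := fun h => hxi (σ.injective (h.trans hσi.symm))
    have h2 : σ x ≠ j := fun h => hxj (σ.injective (h.trans hσj.symm))
    rw [swap_apply_of_ne_of_ne hxi hxj, swap_apply_of_ne_of_ne h1 h2]

lemma keyC {n t : ℕ} {F : Set (Perm (Fin n))} (hF : TCycleIntersecting t F)
    (hfix : IsFixedFam F) {σ π : Perm (Fin n)} (hσF : σ ∈ F) (hπF : π ∈ F)
    {i j : Fin n} (hij : i ≠ j) (hπi : π i ≠ i) (hπj : π j = j) (hσj : σ j ≠ j) :
    ∃ 𝒞 : Finset (Finset (Fin n)), t ≤ 𝒞.card ∧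
      (∀ B ∈ 𝒞, IsCommonCycle σ (compPerm i j π) B) ∧
      (𝒞 : Set (Finset (Fin n))).Pairwise fun A B => Disjoint A B := by
  obtain ⟨c_i, c_j, c_pre, c_other⟩ := compPermSpec hij hπi hπj
  have hπinv : π⁻¹ i ≠ i := by
    intro h
    have h2 := congrArg π h
    rw [Perm.apply_inv_self] at h2
    exact hπi h2.symm
  have hπinvj : π⁻¹ i ≠ j := by
    intro h
    have h2 := congrArg π h
    rw [Perm.apply_inv_self, hπj] at h2
    exact hij h2
  set π₀ := ijFix i (π i) π with hπ₀def
  have hπ₀eq : π₀ = π * Equiv.swap i (π⁻¹ i) := by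
    rw [hπ₀def]; unfold ijFix; rw [if_pos rfl]
  have hπ₀F : π₀ ∈ F := memOfFixedFam hfix hπF (Ne.symm hπi)
  have hπ₀i : π₀ i = i := by
    rw [hπ₀eq, Perm.mul_apply, swap_apply_left, Perm.apply_inv_self]
  have hπ₀j : π₀ j = j := by
    rw [hπ₀eq, Perm.mul_apply, swap_apply_of_ne_of_ne (Ne.symm hij) (Ne.symm hπinvj), hπj]
  have hπ₀inv : π₀ (π⁻¹ i) = π i := by
    rw [hπ₀eq, Perm.mul_apply, swap_apply_right]
  have hπ₀other : ∀ x, x ≠ i → π x ≠ i → π₀ x = π x := by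
    intro x h1 h2
    rw [hπ₀eq, Perm.mul_apply, swap_apply_of_ne_of_ne h1
      (fun h => h2 (by rw [h, Perm.apply_inv_self]))]
  obtain ⟨𝒞, hcard, hcyc, hdisj⟩ := hF σ hσF π₀ hπ₀F
  by_cases hB : ∃ B ∈ 𝒞, π⁻¹ i ∈ B
  · -- second comparison with π itself
    obtain ⟨B₀, hB₀, hmem⟩ := hB
    have hcc₀ := hcyc B₀ hB₀
    have hiB₀ : i ∉ B₀ := by
      intro hi
      have hσi : σ i = i := (hcc₀.2.2.2.1 i hi).trans hπ₀i
      exact hπinv (fixedOfSameCycle hσi (hcc₀.2.2.2.2 i hi _ hmem))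
    have hπiB₀ : π i ∈ B₀ := by
      have h := hcc₀.2.2.1 _ hmem
      rwa [hπ₀inv] at h
    obtain ⟨𝒟, hcard', hcyc', hdisj'⟩ := hF σ hσF π hπF
    refine ⟨𝒟, hcard', ?_, hdisj'⟩
    intro D hD
    have hcc := hcyc' D hD
    have hiD : i ∉ D := by
      intro hi
      have hπiD : π i ∈ D := hcc.2.2.1 i hi
      have hsc : σ.SameCycle (π i) i := hcc.2.2.2.2 _ hπiD i hi
      exact hiB₀ (memOfSameCycle hcc₀.2.1 hπiB₀ hsc)
    refine hcc.transfer ?_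
    intro x hx
    have hxi : x ≠ i := fun h => hiD (h ▸ hx)
    have hxj : x ≠ j := by
      intro h
      subst h
      exact hσj ((hcc.2.2.2.1 x hx).trans hπj)
    have hπxi : π x ≠ i := by
      intro h
      apply hiD
      rw [← h]
      exact hcc.2.2.1 x hx
    exact (c_other x hxi hxj hπxi).symm
  · -- all cycles transfer directly
    refine ⟨𝒞, hcard, ?_, hdisj⟩
    intro B hBmem
    have hcc := hcyc B hBmem
    refine hcc.transfer ?_
    intro x hx
    by_cases hxi : x = i
    · subst hxi; rw [hπ₀i, c_i]
    · have hxj : x ≠ j := by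
        intro h
        subst h
        exact hσj ((hcc.2.2.2.1 x hx).trans hπ₀j)
      have hπxi : π x ≠ i := by
        intro h
        apply hB
        have hx' : π⁻¹ i = x := by rw [← h, Perm.inv_apply_self]
        exact ⟨B, hBmem, by rw [hx']; exact hx⟩
      rw [hπ₀other x hxi hπxi, c_other x hxi hxj hπxi]

lemma caseTwoKey {n t : ℕ} {F : Set (Perm (Fin n))} (hF : TCycleIntersecting t F)
    (hfix : IsFixedFam F) {σ π : Perm (Fin n)} (hσF : σ ∈ F) (hπF : π ∈ F)
    {i j : Fin n} (hij : i ≠ j) (hcσ : compPerm i j σ ∈ F)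
    (hcπ : compPerm i j π ∉ F) :
    ∃ 𝒞 : Finset (Finset (Fin n)), t ≤ 𝒞.card ∧
      (∀ B ∈ 𝒞, IsCommonCycle σ (compPerm i j π) B) ∧
      (𝒞 : Set (Finset (Fin n))).Pairwise fun A B => Disjoint A B := by
  have hcond : π i ≠ i ∧ π j = j := by
    by_contra h
    exact hcπ (by unfold compPerm; rw [if_neg h]; exact hπF)
  by_cases hσj : σ j = j
  · have hsσs : Equiv.swap i j * σ * Equiv.swap i j ∈ F := by
      by_cases hσi : σ i = i
      · rwa [conjEqSelf hσi hσj]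
      · rw [← compPermEqConj hij hσi hσj]; exact hcσ
    have h := conjExistsCycles (t := t) (Equiv.swap i j) (hF _ hsσs π hπF)
    rw [Equiv.swap_inv] at h
    have e1 : Equiv.swap i j * (Equiv.swap i j * σ * Equiv.swap i j) * Equiv.swap i j = σ := by
      ext x; simp [Perm.mul_apply]
    rw [e1, ← compPermEqConj hij hcond.1 hcond.2] at h
    exact h
  · exact keyC hF hfix hσF hπF hij hcond.1 hcond.2 hσj


/-- The `(i,j)`-compression of a fixed `t`-cycle-intersecting family is again
`t`-cycle-intersecting. -/
theorem stmt5 {n t : ℕ} (F : Set (Equiv.Perm (Fin n)))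
    (hF : TCycleIntersecting t F) (hfix : IsFixedFam F)
    (i j : Fin n) (hij : i < j) :
    TCycleIntersecting t (compFam i j F) := by
  intro σ' hσ' π' hπ'
  obtain ⟨σ, hσF, rfl⟩ := hσ'
  obtain ⟨π, hπF, rfl⟩ := hπ'
  have hij' : i ≠ j := ne_of_lt hij
  by_cases hcσ : compPerm i j σ ∈ F <;> by_cases hcπ : compPerm i j π ∈ F
  · simp only [if_pos hcσ, if_pos hcπ]
    exact hF σ hσF π hπF
  · simp only [if_pos hcσ, if_neg hcπ]
    exact caseTwoKey hF hfix hσF hπF hij' hcσ hcπ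
  · simp only [if_neg hcσ, if_pos hcπ]
    obtain ⟨𝒞, hcard, hcyc, hdisj⟩ := caseTwoKey hF hfix hπF hσF hij' hcπ hcσ
    exact ⟨𝒞, hcard, fun B hB => (hcyc B hB).symm, hdisj⟩
  · simp only [if_neg hcσ, if_neg hcπ]
    have hcondσ : σ i ≠ i ∧ σ j = j := by
      by_contra h
      exact hcσ (by unfold compPerm; rw [if_neg h]; exact hσF)
    have hcondπ : π i ≠ i ∧ π j = j := by
      by_contra h
      exact hcπ (by unfold compPerm; rw [if_neg h]; exact hπF)
    have h := conjExistsCycles (t := t) (Equiv.swap i j) (hF σ hσF π hπF)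
    rw [Equiv.swap_inv, ← compPermEqConj hij' hcondσ.1 hcondσ.2,
      ← compPermEqConj hij' hcondπ.1 hcondπ.2] at h
    exact h
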